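/- Let a, φ₁, φ₂ > 0 with φ₁ ≤ φ₂, 0 < ε < 1/2, and let φ : [0,∞) → ℝ be continuous with φ₁ ≤ φ ≤ φ₂. Fix 0 ≤ s ≤ t and set Φ = ∫_s^t φ(r)e^{a(r−s)} dr ≥ 0. Define, for x > 0, the generator action on V₁(x) = x by A(x) = a x + (2φ(s)/((1−2ε))) ∫_{εx}^{(1−ε)x} (y − x)·(1 + yΦ)/(1 + xΦ) dy. Then A(x) ≤ −a x + 3a²/(φ₁(1 + 2ε − 2ε²)) for all x > 0. -/

import Mathlib

theorem stmt19 (a φ₁ φ₂ ε s t : ℝ) (ha : 0 < a) (hφ₁ : 0 < φ₁) (hφ₁₂ : φ₁ ≤ φ₂)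
    (hε : 0 < ε) (hε2 : ε < 1 / 2)
    (φ : ℝ → ℝ) (hcont : Continuous φ)
    (hbd : ∀ r, 0 ≤ r → φ₁ ≤ φ r ∧ φ r ≤ φ₂)
    (hs : 0 ≤ s) (hst : s ≤ t) :
    ∀ x : ℝ, 0 < x →
      a * x + (2 * φ s / (1 - 2 * ε)) *
          ∫ y in (ε * x)..((1 - ε) * x),
            (y - x) * (1 + y * ∫ r in s..t, φ r * Real.exp (a * (r - s))) /
              (1 + x * ∫ r in s..t, φ r * Real.exp (a * (r - s)))
        ≤ -a * x + 3 * a ^ 2 / (φ₁ * (1 + 2 * ε - 2 * ε ^ 2)) := by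
  intro x hx
  set Φ : ℝ := ∫ r in s..t, φ r * Real.exp (a * (r - s)) with hΦdef
  have hΦ0 : 0 ≤ Φ := by
    apply intervalIntegral.integral_nonneg hst
    intro r hr
    have h1 : φ₁ ≤ φ r := (hbd r (hs.trans hr.1)).1
    have h2 : 0 < Real.exp (a * (r - s)) := Real.exp_pos _
    nlinarith
  have hden : 0 < 1 + x * Φ := by positivity
  have h12 : (0:ℝ) < 1 - 2 * ε := by linarith
  set c : ℝ := 1 + 2 * ε - 2 * ε ^ 2 with hcdef
  have hc0 : 0 < c := by nlinarith
  have hc3 : c < 3 := by nlinarith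
  set P : ℝ := φ s with hPdef
  have hP : φ₁ ≤ P := (hbd s hs).1
  clear_value Φ c P
  -- compute the inner integral
  have hint : (∫ y in (ε * x)..((1 - ε) * x), (y - x) * (1 + y * Φ) / (1 + x * Φ))
      = (-(1 - 2*ε) * x^2 / 2 - Φ * x^3 * (1 - 2*ε) * c / 6) / (1 + x * Φ) := by
    rw [intervalIntegral.integral_div]
    congr 1
    have hder : ∀ y ∈ Set.uIcc (ε * x) ((1 - ε) * x),
        HasDerivAt (fun y : ℝ => Φ * y ^ 3 / 3 + (1 - Φ * x) * y ^ 2 / 2 - x * y)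
          ((y - x) * (1 + y * Φ)) y := by
      intro y _
      have h1 : HasDerivAt (fun y : ℝ => y ^ 3) (3 * y ^ 2) y := by
        simpa using hasDerivAt_pow 3 y
      have h2 : HasDerivAt (fun y : ℝ => y ^ 2) (2 * y) y := by
        simpa using hasDerivAt_pow 2 y
      have h3 : HasDerivAt (fun y : ℝ => y) 1 y := hasDerivAt_id y
      have h := (((h1.const_mul Φ).div_const 3).add
        ((h2.const_mul (1 - Φ * x)).div_const 2)).sub (h3.const_mul x)
      exact h.congr_deriv (by ring)
    have hcont2 : IntervalIntegrable (fun y : ℝ => (y - x) * (1 + y * Φ))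
        MeasureTheory.volume (ε * x) ((1 - ε) * x) := by
      apply Continuous.intervalIntegrable
      continuity
    rw [intervalIntegral.integral_eq_sub_of_hasDerivAt hder hcont2, hcdef]
    ring
  rw [hint]
  have e1 : (2 * P / (1 - 2 * ε)) *
      ((-(1 - 2*ε) * x^2 / 2 - Φ * x^3 * (1 - 2*ε) * c / 6) / (1 + x * Φ))
      = -(P * (x^2 + Φ * x^3 * c / 3) / (1 + x * Φ)) := by
    field_simp
    ring
  rw [e1]
  have hpc : (0:ℝ) < φ₁ * c := by positivity
  have h2 : φ₁ * (c / 3) * x ^ 2 ≤ P * (x^2 + Φ * x^3 * c / 3) / (1 + x * Φ) := by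
    rw [le_div_iff₀ hden]
    have hx2 : (0:ℝ) ≤ x ^ 2 := sq_nonneg x
    have hx3 : (0:ℝ) ≤ x ^ 3 := by positivity
    nlinarith [mul_nonneg hx2 (sub_nonneg.mpr hP),
      mul_nonneg hx2 (mul_nonneg hφ₁.le (by linarith : (0:ℝ) ≤ 3 - c)),
      mul_nonneg (mul_nonneg (mul_nonneg hx3 hΦ0) hc0.le) (sub_nonneg.mpr hP)]
  have h3 : 2 * a * x - φ₁ * (c / 3) * x ^ 2 ≤ 3 * a ^ 2 / (φ₁ * c) := by
    rw [le_div_iff₀ hpc]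
    nlinarith [sq_nonneg (3 * a - φ₁ * c * x)]
  linarith
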